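/- Let a = (a_1, …, a_r) with all a_i ≥ 2 integers, let k = (k_1, …, k_r) ∈ ℕ^r be admissible with Z_r(k_1, …, k_r) = 0 and k_i ≤ a_i for all i, and fix j ∈ {1, …, r}. In the fraction field of ℤ[t, x, y], define ζ_0 := x^{Z_{j-1}(k_1,…,k_{j-1})}·y^{Z_j(k_1,…,k_j)}, ζ_1 := x^{Z_{j-2}(k_2,…,k_{j-1})}·y^{Z_{j-1}(k_2,…,k_j)}, and inductively ζ_{i+1} := (ζ_i^{a_i} + t·ζ_i^{k_i}) / ζ_{i-1} for 1 ≤ i ≤ r. Define integers m_i^{(j)} := Z_{j-i-1}(k_{i+1},…,k_{j-1}) if i ≤ j and m_i^{(j)} := −Z_{i-j-1}(a_{j+1},…,a_{i-1}) if i > j. Then for each 1 ≤ i ≤ r+1 there exists a polynomial Q_i ∈ ℤ[t, x, y], not divisible by x, such that ζ_i = x^{m_i^{(j)}} · y^{m_i^{(j+1)}} · Q_i. -/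

import Mathlib

/-- Auxiliary: continuant computed from the *front* of the list; applied to the
reversed list it gives the continuant of the paper. -/
def Zrev {R : Type*} [CommRing R] : List R → R
  | [] => 1
  | [x] => x
  | x :: y :: l => x * Zrev (y :: l) - Zrev l

/-- The continuant polynomial `Z_n(x_1,…,x_n)` (with `Z_{-1}=0`, `Z_0=1`) satisfying
`Z_n(x_1,…,x_n) = x_n·Z_{n-1}(x_1,…,x_{n-1}) - Z_{n-2}(x_1,…,x_{n-2})`. -/
def Zc {R : Type*} [CommRing R] (l : List R) : R := Zrev l.reverse

/-- The Hirzebruch–Jung continued fraction `[x_1,…,x_n] = x_1 - 1/[x_2,…,x_n]`. -/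
noncomputable def hj {K : Type*} [Field K] : List K → K
  | [] => 0
  | [x] => x
  | x :: y :: l => x - 1 / hj (y :: l)

/-- The `n×n` tridiagonal matrix `M(x_1,…,x_n)` with diagonal entries `x_i`,
entries `-1` immediately above and below the diagonal, `0` elsewhere. -/
def triMat {n : ℕ} {R : Type*} [CommRing R] (x : Fin n → R) :
    Matrix (Fin n) (Fin n) R :=
  Matrix.of fun i j =>
    if i = j then x i
    else if (i : ℕ) + 1 = (j : ℕ) ∨ (j : ℕ) + 1 = (i : ℕ) then -1 else 0

/-- A tuple `x ∈ ℕ^n` is admissible if `M(x)` is positive semidefinite of rank `≥ n-1`. -/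
def Admissible {n : ℕ} (x : Fin n → ℕ) : Prop :=
  (triMat fun i => (x i : ℝ)).PosSemidef ∧ n - 1 ≤ (triMat fun i => (x i : ℝ)).rank

variable {R : Type*} [CommRing R]
lemma Zrev_nil : Zrev ([] : List R) = 1 := rfl
lemma Zrev_singleton (x : R) : Zrev [x] = x := rfl
lemma Zrev_cons_cons (x y : R) (l : List R) : Zrev (x::y::l) = x * Zrev (y::l) - Zrev l := rfl
lemma Zrev_concat : ∀ (l : List R) (y x : R),
    Zrev ((l ++ [y]) ++ [x]) = x * Zrev (l ++ [y]) - Zrev l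
  | [], y, x => by simp [Zrev]; ring
  | [z], y, x => by
      show Zrev [z, y, x] = x * Zrev [z, y] - Zrev [z]
      simp [Zrev]; ring
  | z :: w :: m, y, x => by
      have h1 := Zrev_concat (w :: m) y x
      have h2 := Zrev_concat m y x
      show Zrev (z :: w :: (m ++ [y] ++ [x])) = x * Zrev (z :: w :: (m ++ [y])) - Zrev (z :: w :: m)
      rw [Zrev_cons_cons, Zrev_cons_cons, Zrev_cons_cons,
        show w :: (m ++ [y] ++ [x]) = (w :: m ++ [y]) ++ [x] from by simp,
        show w :: (m ++ [y]) = (w :: m) ++ [y] from by simp, h1, h2]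
      ring
lemma Zc_nil : Zc ([] : List R) = 1 := rfl
lemma Zc_singleton (x : R) : Zc [x] = x := rfl
/-- back recurrence -/
lemma Zc_concat (l : List R) (y x : R) : Zc ((l ++ [y]) ++ [x]) = x * Zc (l ++ [y]) - Zc l := by
  simp only [Zc, List.reverse_append, List.reverse_cons, List.reverse_nil, List.nil_append,
    List.cons_append, List.singleton_append]
  exact Zrev_cons_cons x y l.reverse
/-- front recurrence -/
lemma Zc_cons (l : List R) (y x : R) : Zc (x :: (y :: l)) = x * Zc (y :: l) - Zc l := by
  simp only [Zc, List.reverse_cons]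
  rw [show l.reverse ++ [y] ++ [x] = (l.reverse ++ [y]) ++ [x] from by simp]
  exact Zrev_concat l.reverse y x

/-- continuant of `f` over the window `[s, s+n)` -/
def Zw {R : Type*} [CommRing R] (f : ℕ → R) (s n : ℕ) : R := Zc ((List.range' s n).map f)
lemma Zw_zero {R : Type*} [CommRing R] (f : ℕ → R) (s : ℕ) : Zw f s 0 = 1 := rfl
lemma Zw_one {R : Type*} [CommRing R] (f : ℕ → R) (s : ℕ) : Zw f s 1 = f s := rfl
lemma range'_concat' (s m : ℕ) : List.range' s (m+1) = List.range' s m ++ [s+m] := by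
  simpa using List.range'_concat (step := 1) (s := s) (n := m)
lemma range'_cons' (s m : ℕ) : List.range' s (m+1) = s :: List.range' (s+1) m :=
  List.range'_succ ..
/-- back recurrence -/
lemma Zw_back {R : Type*} [CommRing R] (f : ℕ → R) (s n : ℕ) :
    Zw f s (n + 2) = f (s + n + 1) * Zw f s (n + 1) - Zw f s n := by
  unfold Zw
  rw [show n + 2 = (n+1)+1 from rfl, range'_concat' s (n+1), range'_concat' s n,
    List.map_append, List.map_append, List.map_singleton, List.map_singleton, Zc_concat,
    show s + (n+1) = s + n + 1 from rfl]
/-- front recurrence -/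
lemma Zw_front {R : Type*} [CommRing R] (f : ℕ → R) (s n : ℕ) :
    Zw f s (n + 2) = f s * Zw f (s+1) (n + 1) - Zw f (s+2) n := by
  unfold Zw
  rw [show n + 2 = (n+1)+1 from rfl, range'_cons' s (n+1), range'_cons' (s+1) n,
    List.map_cons, List.map_cons, Zc_cons, ← List.map_cons (f := f), ← range'_cons' (s+1) n,
    show s + 1 + 1 = s + 2 from rfl]
section
variable {R S : Type*} [CommRing R] [CommRing S]
lemma Zrev_map (φ : R →+* S) : ∀ l : List R, Zrev (l.map φ) = φ (Zrev l)
  | [] => by simp [Zrev]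
  | [x] => by simp [Zrev]
  | x :: y :: l => by
      have h1 := Zrev_map φ (y :: l)
      have h2 := Zrev_map φ l
      simp only [List.map_cons] at *
      show φ x * Zrev (φ y :: l.map φ) - Zrev (l.map φ) = _
      rw [h1, h2]
      show _ = φ (x * Zrev (y :: l) - Zrev l)
      push_cast [map_mul, map_sub]
      ring

lemma Zc_map (φ : R →+* S) (l : List R) : Zc (l.map φ) = φ (Zc l) := by
  unfold Zc; rw [← Zrev_map φ, List.map_reverse]

end

section
open Matrix
-- helper: sums of ite over Fin with coercion conditions
lemma sum_coe_ite {n c : ℕ} (g : Fin n → ℝ) :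
    (∑ j : Fin n, if (j : ℕ) = c then g j else 0) = if h : c < n then g ⟨c, h⟩ else 0 := by
  split
  · rename_i h
    have e : ∀ j : Fin n, ((j : ℕ) = c) ↔ (j = ⟨c, h⟩) := fun j => by
      rw [Fin.ext_iff]
    simp_rw [e]
    simp [Finset.sum_ite_eq' Finset.univ (⟨c, h⟩ : Fin n) g]
  · rename_i h
    apply Finset.sum_eq_zero
    intro j _
    rw [if_neg]
    omega

lemma tri_mulVec {s : ℕ} (x : ℕ → ℝ) (V : ℕ → ℝ) (i : Fin (s + 1)) :
    ((triMat fun i : Fin (s+1) => x (i : ℕ)) *ᵥ (fun j => V (j : ℕ))) i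
      = x i * V i - (if h : (i:ℕ)+1 < s+1 then V ((i:ℕ)+1) else 0)
        - (if (i:ℕ) = 0 then 0 else V ((i:ℕ)-1)) := by
  unfold triMat
  show (∑ j : Fin (s+1), _) = _
  have key : ∀ j : Fin (s+1),
      (Matrix.of fun i j : Fin (s+1) =>
        if i = j then x (i:ℕ) else if (i : ℕ) + 1 = (j : ℕ) ∨ (j : ℕ) + 1 = (i : ℕ) then -1 else 0) i j
        * V (j:ℕ)
      = (if (j:ℕ) = (i:ℕ) then x (i:ℕ) * V (j:ℕ) else 0)
        + (-(if (j:ℕ) = (i:ℕ)+1 then V (j:ℕ) else 0))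
        + (-(if (j:ℕ) = (i:ℕ)-1 ∧ (i:ℕ) ≠ 0 then V (j:ℕ) else 0)) := by
    intro j
    simp only [Matrix.of_apply]
    by_cases h1 : i = j
    · subst h1; rw [if_pos rfl, if_pos rfl, if_neg (by omega), if_neg (by omega)]; ring
    · have h1' : ¬ ((j:ℕ) = (i:ℕ)) := by
        simp [Fin.ext_iff] at h1; omega
      rw [if_neg h1, if_neg h1']
      by_cases h2 : (i:ℕ)+1 = (j:ℕ)
      · rw [if_pos (Or.inl h2), if_pos (by omega), if_neg (by omega)]; ring
      · by_cases h3 : (j:ℕ)+1 = (i:ℕ)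
        · rw [if_pos (Or.inr h3), if_neg (by omega), if_pos (by omega)]; ring
        · rw [if_neg (by tauto), if_neg (by omega), if_neg (by omega)]; ring
  rw [Finset.sum_congr rfl fun j _ => key j]
  rw [Finset.sum_add_distrib, Finset.sum_add_distrib, Finset.sum_neg_distrib, Finset.sum_neg_distrib]
  have e1 : (∑ j : Fin (s+1), if (j:ℕ) = (i:ℕ) then x (i:ℕ) * V (j:ℕ) else 0) = x i * V i := by
    rw [sum_coe_ite (fun j => x (i:ℕ) * V (j:ℕ))]
    simp [i.isLt]
  have e2 : (∑ j : Fin (s+1), if (j:ℕ) = (i:ℕ)+1 then V (j:ℕ) else 0)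
      = if h : (i:ℕ)+1 < s+1 then V ((i:ℕ)+1) else 0 := by
    rw [sum_coe_ite (fun j => V (j:ℕ))]
  have e3 : (∑ j : Fin (s+1), if (j:ℕ) = (i:ℕ)-1 ∧ (i:ℕ) ≠ 0 then V (j:ℕ) else 0)
      = if (i:ℕ) = 0 then 0 else V ((i:ℕ)-1) := by
    by_cases hi : (i:ℕ) = 0
    · simp [hi]
    · simp only [hi, if_false]
      have : ∀ j : Fin (s+1), ((j:ℕ) = (i:ℕ)-1 ∧ (i:ℕ) ≠ 0) ↔ ((j:ℕ) = (i:ℕ)-1) := by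
        intro j; constructor
        · exact fun h => h.1
        · exact fun h => ⟨h, hi⟩
      simp_rw [this]
      rw [sum_coe_ite (fun j => V (j:ℕ))]
      rw [dif_pos (by omega)]
  rw [e1, e2, e3]
  ring
end

section
open Matrix

lemma tri_pos : ∀ (s : ℕ) (x : ℕ → ℝ),
    ((triMat fun i : Fin (s+1) => x (i : ℕ)).PosSemidef) → 0 < Zw x 1 s := by
  intro s
  induction s with
  | zero => intro x _; show (0:ℝ) < Zw x 1 0; rw [Zw_zero]; norm_num
  | succ s IH =>
    intro x hM
    set V : ℕ → ℝ := fun m => if m = 0 then 0 else Zw x 1 (m-1) with hV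
    have V0 : V 0 = 0 := by simp [hV]
    have V1 : V 1 = 1 := by simp [hV, Zw_zero]
    have Vs : ∀ m, V (m+1) = Zw x 1 m := fun m => by simp [hV]
    have hrec2 : ∀ m, 1 ≤ m → x m * V m - V (m-1) = V (m+1) := by
      intro m hm
      match m, hm with
      | 1, _ => rw [V1, V0]; rw [Vs 1, Zw_one]; ring
      | (m'+2), _ =>
        have e1 : m' + 2 - 1 = m' + 1 := rfl
        rw [e1, Vs (m'+1), Vs m', Vs (m'+2), Zw_back x 1 m',
          show 1 + m' + 1 = m' + 2 from by omega]
    -- IH on the leading principal submatrix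
    have hsub : ((triMat fun i : Fin (s+1) => x (i : ℕ)).PosSemidef) := by
      have h2 := hM.submatrix (Fin.castSucc)
      have : (triMat fun i : Fin (s+2) => x (i : ℕ)).submatrix Fin.castSucc Fin.castSucc
          = triMat fun i : Fin (s+1) => x (i : ℕ) := by
        ext i j
        simp only [Matrix.submatrix_apply, triMat, Matrix.of_apply, Fin.coe_castSucc,
          Fin.castSucc_inj]
      rwa [this] at h2
    have hVpos : 0 < V (s+1) := by rw [Vs s]; exact IH x hsub
    set Zfull := Zw x 1 (s+1) with hZf
    have hZV : Zfull = V (s+2) := (Vs (s+1)).symm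
    set w : Fin (s+2) → ℝ := fun j => V (j : ℕ) with hw
    have MV : ∀ i : Fin (s+2), ((triMat fun i : Fin (s+2) => x (i : ℕ)) *ᵥ w) i
        = if (i:ℕ) = 0 then -1 else if (i:ℕ) = s+1 then Zfull else 0 := by
      intro i
      rw [show ((triMat fun i : Fin (s+2) => x (i : ℕ)) *ᵥ w) i
        = ((triMat fun i : Fin ((s+1)+1) => x (i : ℕ)) *ᵥ (fun j => V (j:ℕ))) i from rfl]
      rw [tri_mulVec x V i]
      by_cases h0 : (i:ℕ) = 0
      · rw [if_pos h0, if_pos h0, h0, V0, dif_pos (by omega), V1]; ring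
      · rw [if_neg h0, if_neg h0]
        by_cases htop : (i:ℕ) = s+1
        · rw [if_pos htop, htop, dif_neg (by omega)]
          have h := hrec2 (s+1) (by omega)
          rw [show s+1-1 = s from rfl, show s+1+1 = s+2 from rfl] at h
          rw [hZV, show s+1-1 = s from rfl]
          linarith
        · rw [if_neg htop, dif_pos (by omega)]
          have := hrec2 (i:ℕ) (by omega)
          linarith [this]
    have dot : dotProduct (star w) ((triMat fun i : Fin (s+2) => x (i : ℕ)) *ᵥ w)
        = V (s+1) * Zfull := by
      rw [show star w = w from by
        funext i; simp [hw]]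
      unfold dotProduct
      have pw : ∀ i : Fin (s+2), w i * ((triMat fun i : Fin (s+2) => x (i : ℕ)) *ᵥ w) i
          = if (i:ℕ) = s+1 then V (s+1) * Zfull else 0 := by
        intro i
        rw [MV i]
        by_cases h0 : (i:ℕ) = 0
        · rw [if_pos h0, if_neg (by omega), hw]
          show V (i:ℕ) * (-1) = 0
          rw [h0, V0]; ring
        · rw [if_neg h0]
          by_cases htop : (i:ℕ) = s+1
          · rw [if_pos htop, if_pos htop, hw]; show V (i:ℕ) * Zfull = _; rw [htop]
          · rw [if_neg htop, if_neg htop, mul_zero]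
      rw [Finset.sum_congr rfl fun i _ => pw i]
      rw [sum_coe_ite (fun i => V (s+1) * Zfull)]
      rw [dif_pos (by omega)]
    have hnn : 0 ≤ V (s+1) * Zfull := by rw [← dot]; exact hM.dotProduct_mulVec_nonneg w
    have hZnn : 0 ≤ Zfull := nonneg_of_mul_nonneg_right hnn hVpos
    rcases lt_or_eq_of_le hZnn with h | h
    · exact h
    · exfalso
      have hdot0 : dotProduct (star w) ((triMat fun i : Fin (s+2) => x (i : ℕ)) *ᵥ w) = 0 := by
        rw [dot, ← h, mul_zero]
      have hker := (hM.dotProduct_mulVec_zero_iff w).mp hdot0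
      have := congrFun hker (0 : Fin (s+2))
      rw [MV (0 : Fin (s+2))] at this
      simp at this
end

section
open Matrix

lemma Zw_pos_window (r : ℕ) (x : ℕ → ℝ)
    (hM : (triMat fun i : Fin r => x ((i : ℕ)+1)).PosSemidef)
    (p n : ℕ) (hp : 2 ≤ p) (hn : p + n ≤ r + 1) : 0 < Zw x p n := by
  have hlt : ∀ i : Fin (n+1), p - 2 + (i:ℕ) < r := by
    intro i; have := i.isLt; omega
  set y : ℕ → ℝ := fun l => x (p - 1 + l) with hy
  have hsub : ((triMat fun i : Fin (n+1) => y (i : ℕ)).PosSemidef) := by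
    have h2 := hM.submatrix (fun i : Fin (n+1) => (⟨p - 2 + (i:ℕ), hlt i⟩ : Fin r))
    have e : (triMat fun i : Fin r => x ((i : ℕ)+1)).submatrix
        (fun i : Fin (n+1) => (⟨p - 2 + (i:ℕ), hlt i⟩ : Fin r))
        (fun i : Fin (n+1) => (⟨p - 2 + (i:ℕ), hlt i⟩ : Fin r))
        = triMat fun i : Fin (n+1) => y (i : ℕ) := by
      ext i j
      simp only [Matrix.submatrix_apply, triMat, Matrix.of_apply, Fin.mk.injEq]
      have c1 : (p - 2 + (i:ℕ) = p - 2 + (j:ℕ)) ↔ (i = j) := by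
        rw [Fin.ext_iff]; omega
      have c2 : (p - 2 + (i:ℕ) + 1 = p - 2 + (j:ℕ) ∨ p - 2 + (j:ℕ) + 1 = p - 2 + (i:ℕ))
          ↔ ((i:ℕ) + 1 = (j:ℕ) ∨ (j:ℕ) + 1 = (i:ℕ)) := by omega
      rw [if_congr c1 rfl rfl, if_congr (iff_of_eq rfl) rfl (if_congr c2 rfl rfl)]
      have e2 : p - 2 + (i:ℕ) + 1 = p - 1 + (i:ℕ) := by omega
      rw [e2]
    rwa [e] at h2
  have hpos := tri_pos n y hsub
  have hlist : List.range' p n = List.map (fun l => (p-1) + l) (List.range' 1 n) := by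
    rw [List.map_add_range']
    congr 1
    omega
  have : Zw x p n = Zw y 1 n := by
    unfold Zw
    rw [hlist, List.map_map]
    rfl
  rw [this]; exact hpos

lemma Zw_pos_int (r : ℕ) (k : ℕ → ℕ)
    (hM : (triMat fun i : Fin r => ((k ((i : ℕ)+1) : ℝ))).PosSemidef)
    (p n : ℕ) (hp : 2 ≤ p) (hn : p + n ≤ r + 1) : 0 < Zw (fun l => (k l : ℤ)) p n := by
  have h := Zw_pos_window r (fun l => (k l : ℝ)) hM p n hp hn
  have e : Zw (fun l => (k l : ℝ)) p n
      = ((Zw (fun l => (k l : ℤ)) p n : ℤ) : ℝ) := by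
    unfold Zw
    rw [show (fun l => (k l : ℝ)) = (fun z : ℤ => (z : ℝ)) ∘ (fun l => (k l : ℤ)) from rfl,
      ← List.map_map]
    exact (Zc_map (Int.castRingHom ℝ) _)
  rw [e] at h
  exact_mod_cast h
end

-- ≥1 lemma for continuants with entries ≥ 2
lemma Zw_ge (f : ℕ → ℤ) (s : ℕ) : ∀ n, (∀ l, s ≤ l → l < s + n → 2 ≤ f l) →
    1 ≤ Zw f s n ∧ (1 ≤ n → Zw f s (n-1) ≤ Zw f s n) := by
  intro n
  induction n with
  | zero => intro _; refine ⟨by rw [Zw_zero], by omega⟩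
  | succ n IH =>
    intro hf
    obtain ⟨h1, h2⟩ := IH (fun l hl hl' => hf l hl (by omega))
    match n with
    | 0 =>
      have := hf s (by omega) (by omega)
      constructor
      · rw [Zw_one]; omega
      · intro _; rw [Zw_one, show (1:ℕ)-1 = 0 from rfl, Zw_zero]; omega
    | (m+1) =>
      have h2' := h2 (by omega)
      rw [show m+1-1 = m from rfl] at h2'
      have hf2 : 2 ≤ f (s + m + 1) := hf (s+m+1) (by omega) (by omega)
      have key : Zw f s (m+1) ≤ Zw f s (m+2) := by
        rw [Zw_back f s m]
        nlinarith
      exact ⟨le_trans h1 key, fun _ => key⟩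

section Sdefs
open MvPolynomial
variable (k a : ℕ → ℕ)

/-- `m_i^{(jj)}` -/
def mI (jj i : ℕ) : ℤ :=
  if i ≤ jj then
    (if i = jj then 0 else Zw (fun l => (k l : ℤ)) (i+1) (jj - i - 1))
  else -(Zw (fun l => (a l : ℤ)) (jj+1) (i - jj - 1))

def eL (i : ℕ) : ℕ := a i - k i
def pxN (jj i : ℕ) : ℕ := ((eL k a i : ℤ) * mI k a jj i).toNat
def nxN (jj i : ℕ) : ℕ := ((eL k a i : ℤ) * (-(mI k a jj i))).toNat
def EN (l i : ℕ) : ℕ := (Zw (fun t => (k t : ℤ)) (l+1) (i - 1 - l)).toNat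

noncomputable def Sq (j : ℕ) : ℕ → MvPolynomial (Fin 3) ℤ
  | i =>
    X 1 ^ pxN k a j i * X 2 ^ pxN k a (j+1) i *
      (∏ l ∈ (Finset.Ico 1 i).attach,
        Sq j l.1 ^ EN k l.1 i) ^ eL k a i
    + X 0 * X 1 ^ nxN k a j i * X 2 ^ nxN k a (j+1) i
  decreasing_by exact (Finset.mem_Ico.mp l.2).2

noncomputable def Qq (j i : ℕ) : MvPolynomial (Fin 3) ℤ :=
  ∏ l ∈ Finset.Ico 1 i, Sq k a j l ^ EN k l i

lemma Sq_eq (j i : ℕ) : Sq k a j i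
    = X 1 ^ pxN k a j i * X 2 ^ pxN k a (j+1) i * (Qq k a j i) ^ eL k a i
      + X 0 * X 1 ^ nxN k a j i * X 2 ^ nxN k a (j+1) i := by
  rw [Sq, Qq, Finset.prod_attach (Finset.Ico 1 i) (fun l => Sq k a j l ^ EN k l i)]
end Sdefs

section Facts
variable (k a : ℕ → ℕ) (r : ℕ)

lemma mI_lt (jj i : ℕ) (h : i < jj) :
    mI k a jj i = Zw (fun l => (k l : ℤ)) (i+1) (jj - i - 1) := by
  unfold mI; rw [if_pos (by omega), if_neg (by omega)]

lemma mI_gt (jj i : ℕ) (h : jj < i) :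
    mI k a jj i = -(Zw (fun l => (a l : ℤ)) (jj+1) (i - jj - 1)) := by
  unfold mI; rw [if_neg (by omega)]

lemma mI_pos (hkZ : ∀ p n, 2 ≤ p → p + n ≤ r + 1 → 0 < Zw (fun l => (k l : ℤ)) p n)
    (jj : ℕ) (hjr : jj ≤ r + 1) (i : ℕ) (h1 : 1 ≤ i) (h2 : i < jj) : 0 < mI k a jj i := by
  rw [mI_lt k a jj i h2]
  exact hkZ (i+1) (jj-i-1) (by omega) (by omega)

lemma mI_self (jj : ℕ) : mI k a jj jj = 0 := by unfold mI; simp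

lemma mI_nonneg (hkZ : ∀ p n, 2 ≤ p → p + n ≤ r + 1 → 0 < Zw (fun l => (k l : ℤ)) p n)
    (jj : ℕ) (hjr : jj ≤ r + 1) (i : ℕ) (h1 : 1 ≤ i) (h2 : i ≤ jj) : 0 ≤ mI k a jj i := by
  rcases eq_or_lt_of_le h2 with rfl | h
  · rw [mI_self]
  · exact le_of_lt (mI_pos k a r hkZ jj hjr i h1 h)

lemma mI_neg (ha : ∀ i, 1 ≤ i → i ≤ r → 2 ≤ a i)
    (jj : ℕ) (hjj : 1 ≤ jj) (i : ℕ) (h2 : jj < i) (h3 : i ≤ r + 1) : mI k a jj i ≤ -1 := by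
  rw [mI_gt k a jj i h2]
  have h := (Zw_ge (fun l => (a l : ℤ)) (jj+1) (i - jj - 1) (fun l hl hl' => by
    have h2a := ha l (by omega) (by omega)
    show (2:ℤ) ≤ (a l : ℤ)
    exact_mod_cast h2a)).1
  omega

lemma nxN_zero (hkZ : ∀ p n, 2 ≤ p → p + n ≤ r + 1 → 0 < Zw (fun l => (k l : ℤ)) p n)
    (jj : ℕ) (hjr : jj ≤ r + 1) (i : ℕ) (h1 : 1 ≤ i) (h2 : i ≤ jj) : nxN k a jj i = 0 := by
  have hm := mI_nonneg k a r hkZ jj hjr i h1 h2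
  have hel : (0:ℤ) ≤ (eL k a i : ℤ) := Int.ofNat_nonneg _
  have : (eL k a i : ℤ) * (-(mI k a jj i)) ≤ 0 := by nlinarith
  unfold nxN
  omega

lemma pxN_eq (hkZ : ∀ p n, 2 ≤ p → p + n ≤ r + 1 → 0 < Zw (fun l => (k l : ℤ)) p n)
    (jj : ℕ) (hjr : jj ≤ r + 1) (i : ℕ) (h1 : 1 ≤ i) (h2 : i ≤ jj) :
    (pxN k a jj i : ℤ) = (eL k a i : ℤ) * mI k a jj i := by
  have hm := mI_nonneg k a r hkZ jj hjr i h1 h2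
  have hel : (0:ℤ) ≤ (eL k a i : ℤ) := Int.ofNat_nonneg _
  exact Int.toNat_of_nonneg (mul_nonneg hel hm)

lemma pxN_zero (ha : ∀ i, 1 ≤ i → i ≤ r → 2 ≤ a i)
    (jj : ℕ) (hjj : 1 ≤ jj) (i : ℕ) (h2 : jj < i) (h3 : i ≤ r + 1) : pxN k a jj i = 0 := by
  have hm := mI_neg k a r ha jj hjj i h2 h3
  have hel : (0:ℤ) ≤ (eL k a i : ℤ) := Int.ofNat_nonneg _
  have : (eL k a i : ℤ) * mI k a jj i ≤ 0 := by nlinarith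
  unfold pxN
  omega

lemma nxN_eq (ha : ∀ i, 1 ≤ i → i ≤ r → 2 ≤ a i)
    (jj : ℕ) (hjj : 1 ≤ jj) (i : ℕ) (h2 : jj < i) (h3 : i ≤ r + 1) :
    (nxN k a jj i : ℤ) = (eL k a i : ℤ) * (-(mI k a jj i)) := by
  have hm := mI_neg k a r ha jj hjj i h2 h3
  have hel : (0:ℤ) ≤ (eL k a i : ℤ) := Int.ofNat_nonneg _
  exact Int.toNat_of_nonneg (by nlinarith)

lemma mI_rec (hkZ : ∀ p n, 2 ≤ p → p + n ≤ r + 1 → 0 < Zw (fun l => (k l : ℤ)) p n)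
    (ha : ∀ i, 1 ≤ i → i ≤ r → 2 ≤ a i) (hk : ∀ i, 1 ≤ i → i ≤ r → k i ≤ a i)
    (jj : ℕ) (hjj : 1 ≤ jj) (hjr : jj ≤ r + 1) (q : ℕ) (hq1 : 1 ≤ q) (hqr : q ≤ r) :
    mI k a jj (q+1) = (k q : ℤ) * mI k a jj q - (nxN k a jj q : ℤ) - mI k a jj (q-1) := by
  have hcast : (eL k a q : ℤ) = (a q : ℤ) - (k q : ℤ) := by
    unfold eL; push_cast [Nat.cast_sub (hk q hq1 hqr)]; ring
  rcases lt_trichotomy q jj with hlt | heq | hgt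
  · rw [nxN_zero k a r hkZ jj hjr q hq1 (le_of_lt hlt)]
    push_cast
    rcases eq_or_lt_of_le (show q + 1 ≤ jj by omega) with heq1 | hlt1
    · -- q + 1 = jj
      subst heq1
      rw [mI_self, mI_lt k a (q+1) q (by omega), mI_lt k a (q+1) (q-1) (by omega)]
      rw [show q + 1 - q - 1 = 0 from by omega, Zw_zero,
        show q - 1 + 1 = q from by omega, show q + 1 - (q-1) - 1 = 1 from by omega, Zw_one]
      ring
    · -- q + 1 < jj
      obtain ⟨n, rfl⟩ : ∃ n, jj = q + n + 2 := ⟨jj - q - 2, by omega⟩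
      rw [mI_lt k a _ (q+1) (by omega), mI_lt k a _ q (by omega),
        mI_lt k a _ (q-1) (by omega)]
      rw [show q + n + 2 - (q+1) - 1 = n from by omega,
        show q + n + 2 - q - 1 = n + 1 from by omega,
        show q - 1 + 1 = q from by omega,
        show q + n + 2 - (q - 1) - 1 = n + 2 from by omega]
      have hf := Zw_front (fun l => (k l : ℤ)) q n
      rw [show q + 2 = q + 1 + 1 from rfl] at hf
      linarith [hf]
  · subst heq
    rw [nxN_zero k a r hkZ q hjr q hq1 le_rfl, mI_self,
      mI_gt k a q (q+1) (by omega), mI_lt k a q (q-1) (by omega)]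
    rw [show q + 1 - q - 1 = 0 from by omega, Zw_zero,
      show q - 1 + 1 = q from by omega, show q - (q - 1) - 1 = 0 from by omega, Zw_zero]
    push_cast; ring
  · rw [nxN_eq k a r ha jj hjj q hgt (by omega)]
    rcases eq_or_lt_of_le (show jj + 1 ≤ q by omega) with heq1 | hlt1
    · -- q = jj + 1
      subst heq1
      rw [mI_gt k a jj (jj+1+1) (by omega), mI_gt k a jj (jj+1) (by omega),
        show jj + 1 - 1 = jj from by omega, mI_self]
      rw [show jj + 1 + 1 - jj - 1 = 1 from by omega, Zw_one,
        show jj + 1 - jj - 1 = 0 from by omega, Zw_zero]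
      rw [hcast]
      ring
    · -- q ≥ jj + 2
      obtain ⟨n, rfl⟩ : ∃ n, q = jj + n + 2 := ⟨q - jj - 2, by omega⟩
      rw [mI_gt k a jj (jj+n+2+1) (by omega), mI_gt k a jj (jj+n+2) (by omega),
        mI_gt k a jj (jj+n+2-1) (by omega)]
      rw [show jj + n + 2 + 1 - jj - 1 = n + 2 from by omega,
        show jj + n + 2 - jj - 1 = n + 1 from by omega,
        show jj + n + 2 - 1 - jj - 1 = n from by omega]
      have hb := Zw_back (fun l => (a l : ℤ)) (jj+1) n
      rw [show jj + 1 + n + 1 = jj + n + 2 from by omega] at hb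
      rw [hcast, hb]
      ring
end Facts

section Qfacts
variable (k a : ℕ → ℕ) (r : ℕ)

lemma EN_rec (hkZ : ∀ p n, 2 ≤ p → p + n ≤ r + 1 → 0 < Zw (fun l => (k l : ℤ)) p n)
    (p : ℕ) (hp : p + 1 ≤ r) (l : ℕ) (hl1 : 1 ≤ l) (hl2 : l < p + 2) :
    EN k l (p+2) + (if l < p then EN k l p else 0)
      = (if l < p + 1 then k (p+1) * EN k l (p+1) else 0) + (if l = p + 1 then 1 else 0) := by
  rcases show l = p + 1 ∨ l = p ∨ l < p from by omega with h1 | h2 | hlp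
  · rw [if_neg (by omega), if_neg (by omega), if_pos h1]
    unfold EN
    rw [show p + 2 - 1 - l = 0 from by omega, Zw_zero]
    omega
  · rw [if_neg (by omega), if_pos (by omega), if_neg (by omega)]
    unfold EN
    rw [show p + 2 - 1 - l = 1 from by omega, Zw_one,
      show p + 1 - 1 - l = 0 from by omega, Zw_zero, show l + 1 = p + 1 from by omega]
    simp
  · rw [if_pos hlp, if_pos (by omega), if_neg (by omega)]
    obtain ⟨n, rfl⟩ : ∃ n, p = l + n + 1 := ⟨p - l - 1, by omega⟩
    unfold EN
    rw [show l + n + 1 + 2 - 1 - l = n + 2 from by omega,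
      show l + n + 1 - 1 - l = n from by omega,
      show l + n + 1 + 1 - 1 - l = n + 1 from by omega]
    have hA := hkZ (l+1) (n+2) (by omega) (by omega)
    have hB := hkZ (l+1) n (by omega) (by omega)
    have hC := hkZ (l+1) (n+1) (by omega) (by omega)
    have hid := Zw_back (fun t => (k t : ℤ)) (l+1) n
    rw [show l + 1 + n + 1 = l + n + 2 from by omega] at hid
    have goal' : ((Zw (fun t => (k t : ℤ)) (l+1) (n+2)).toNat : ℤ)
        + ((Zw (fun t => (k t : ℤ)) (l+1) n).toNat : ℤ)
        = (k (l+n+2) : ℤ) * ((Zw (fun t => (k t : ℤ)) (l+1) (n+1)).toNat : ℤ) := by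
      rw [Int.toNat_of_nonneg (le_of_lt hA), Int.toNat_of_nonneg (le_of_lt hB),
        Int.toNat_of_nonneg (le_of_lt hC)]
      linarith [hid]
    rw [show l + n + 1 + 1 = l + n + 2 from by omega]
    exact_mod_cast goal'

lemma Q_rec (hkZ : ∀ p n, 2 ≤ p → p + n ≤ r + 1 → 0 < Zw (fun l => (k l : ℤ)) p n)
    (j p : ℕ) (hp : p + 1 ≤ r) :
    Qq k a j (p+2) * Qq k a j p = Qq k a j (p+1) ^ k (p+1) * Sq k a j (p+1) := by
  unfold Qq
  have e1 : (∏ l ∈ Finset.Ico 1 (p+2), Sq k a j l ^ (if l < p then EN k l p else 0))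
      = ∏ l ∈ Finset.Ico 1 p, Sq k a j l ^ EN k l p := by
    rw [← Finset.prod_subset (Finset.Ico_subset_Ico le_rfl (show p ≤ p + 2 by omega))
      (fun x hx hnx => by
        rw [if_neg (fun hc => hnx (Finset.mem_Ico.mpr
          ⟨(Finset.mem_Ico.mp hx).1, hc⟩)), pow_zero])]
    exact Finset.prod_congr rfl (fun x hx => by
      rw [if_pos (Finset.mem_Ico.mp hx).2])
  have e2 : (∏ l ∈ Finset.Ico 1 (p+2), Sq k a j l
          ^ (if l < p + 1 then k (p+1) * EN k l (p+1) else 0))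
      = (∏ l ∈ Finset.Ico 1 (p+1), Sq k a j l ^ EN k l (p+1)) ^ k (p+1) := by
    rw [← Finset.prod_pow]
    rw [← Finset.prod_subset (Finset.Ico_subset_Ico le_rfl (show p + 1 ≤ p + 2 by omega))
      (fun x hx hnx => by
        rw [if_neg (fun hc => hnx (Finset.mem_Ico.mpr
          ⟨(Finset.mem_Ico.mp hx).1, hc⟩)), pow_zero])]
    exact Finset.prod_congr rfl (fun x hx => by
      rw [if_pos (Finset.mem_Ico.mp hx).2, ← pow_mul, mul_comm (EN k x (p+1))])
  have e3 : (∏ l ∈ Finset.Ico 1 (p+2), Sq k a j l ^ (if l = p + 1 then 1 else 0))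
      = Sq k a j (p+1) := by
    have h : ∀ l, Sq k a j l ^ (if l = p + 1 then 1 else 0)
        = if l = p + 1 then Sq k a j l else 1 := by
      intro l; split <;> simp
    simp_rw [h]
    rw [Finset.prod_ite_eq' (Finset.Ico 1 (p+2)) (p+1) (fun l => Sq k a j l)]
    rw [if_pos (Finset.mem_Ico.mpr ⟨by omega, by omega⟩)]
  rw [← e1, ← e2, ← e3, ← Finset.prod_mul_distrib, ← Finset.prod_mul_distrib]
  apply Finset.prod_congr rfl
  intro x hx
  rw [← pow_add, ← pow_add]
  congr 1
  exact EN_rec k r hkZ p hp x (Finset.mem_Ico.mp hx).1 (Finset.mem_Ico.mp hx).2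
end Qfacts

section NZ
open MvPolynomial

noncomputable def ev0 : MvPolynomial (Fin 3) ℤ →+* MvPolynomial (Fin 3) ℤ :=
  (aeval (fun i : Fin 3 => if i = 1 then 0 else X i)).toRingHom

noncomputable def ev2 : MvPolynomial (Fin 3) ℤ →+* MvPolynomial (Fin 3) ℤ :=
  (aeval (fun i : Fin 3 => if i = 2 then 0 else X i)).toRingHom

lemma ev0_X0 : ev0 (X 0 : MvPolynomial (Fin 3) ℤ) = X 0 := by simp [ev0]
lemma ev0_X1 : ev0 (X 1 : MvPolynomial (Fin 3) ℤ) = 0 := by simp [ev0]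
lemma ev0_X2 : ev0 (X 2 : MvPolynomial (Fin 3) ℤ) = X 2 := by simp [ev0]
lemma ev2_X0 : ev2 (X 0 : MvPolynomial (Fin 3) ℤ) = X 0 := by simp [ev2]
lemma ev2_X2 : ev2 (X 2 : MvPolynomial (Fin 3) ℤ) = 0 := by simp [ev2]

variable (k a : ℕ → ℕ) (r : ℕ)

lemma Sq_ev0_ne (hkZ : ∀ p n, 2 ≤ p → p + n ≤ r + 1 → 0 < Zw (fun l => (k l : ℤ)) p n)
    (ha : ∀ i, 1 ≤ i → i ≤ r → 2 ≤ a i)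
    (j : ℕ) (hj1 : 1 ≤ j) (hjr : j ≤ r) :
    ∀ l, l ≤ r → 1 ≤ l → ev0 (Sq k a j l) ≠ 0 := by
  intro l
  induction l using Nat.strong_induction_on with
  | _ l IH =>
    intro hlr hl1
    have hQ : ev0 (Qq k a j l) ≠ 0 := by
      unfold Qq
      rw [map_prod]
      apply Finset.prod_ne_zero_iff.mpr
      intro x hx
      rw [map_pow]
      have hx' := Finset.mem_Ico.mp hx
      exact pow_ne_zero _ (IH x hx'.2 (by omega) hx'.1)
    rw [Sq_eq, map_add, map_mul, map_mul, map_mul, map_mul, map_pow, map_pow, map_pow,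
      map_pow, map_pow, ev0_X0, ev0_X1, ev0_X2]
    by_cases hel : eL k a l = 0
    · have hpx : pxN k a j l = 0 := by unfold pxN; rw [hel]; simp
      have hpy : pxN k a (j+1) l = 0 := by unfold pxN; rw [hel]; simp
      have hnx : nxN k a j l = 0 := by unfold nxN; rw [hel]; simp
      have hny : nxN k a (j+1) l = 0 := by unfold nxN; rw [hel]; simp
      rw [hpx, hpy, hnx, hny, hel]
      simp only [pow_zero, one_mul, mul_one]
      intro h
      have hc := congrArg constantCoeff h
      rw [map_add, map_one, constantCoeff_X, map_zero] at hc
      norm_num at hc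
    · have hel1 : 1 ≤ eL k a l := by omega
      rcases lt_trichotomy l j with hlj | rfl | hjl
      · -- l < j : first term vanishes, second is X0 * X2^ny
        have hpx : pxN k a j l ≠ 0 := by
          have he := pxN_eq k a r hkZ j (by omega) l hl1 (by omega)
          have hm := mI_pos k a r hkZ j (by omega) l hl1 hlj
          have : (0:ℤ) < (eL k a l : ℤ) * mI k a j l := by
            apply mul_pos _ hm
            exact_mod_cast hel1
          omega
        have hnx : nxN k a j l = 0 := nxN_zero k a r hkZ j (by omega) l hl1 (by omega)
        rw [hnx, pow_zero, zero_pow hpx, zero_mul, zero_mul, zero_add, mul_one]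
        exact mul_ne_zero (X_ne_zero 0) (pow_ne_zero _ (X_ne_zero 2))
      · -- l = j
        have hmy : mI k a (l+1) l = 1 := by
          rw [mI_lt k a (l+1) l (by omega), show l + 1 - l - 1 = 0 from by omega, Zw_zero]
        have hpx : pxN k a l l = 0 := by unfold pxN; rw [mI_self]; simp
        have hnx : nxN k a l l = 0 := by unfold nxN; rw [mI_self]; simp
        have hpy : pxN k a (l+1) l = eL k a l := by
          unfold pxN; rw [hmy]; simp
        have hny : nxN k a (l+1) l = 0 := by
          unfold nxN; rw [hmy]; simp
        rw [hpx, hnx, hpy, hny]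
        simp only [pow_zero, one_mul, mul_one]
        intro h
        have hc := congrArg ev2 h
        simp only [map_add, map_mul, map_pow, map_zero, ev2_X0, ev2_X2] at hc
        rw [zero_pow (by omega : eL k a l ≠ 0), zero_mul, zero_add] at hc
        exact X_ne_zero 0 hc
      · -- j < l : second term vanishes
        have hpx : pxN k a j l = 0 := pxN_zero k a r ha j hj1 l hjl (by omega)
        have hnx : nxN k a j l ≠ 0 := by
          have he := nxN_eq k a r ha j hj1 l hjl (by omega)
          have hm := mI_neg k a r ha j hj1 l hjl (by omega)
          have : (0:ℤ) < (eL k a l : ℤ) * (-(mI k a j l)) := by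
            apply mul_pos _ (by omega)
            exact_mod_cast hel1
          omega
        rw [hpx, pow_zero, one_mul, zero_pow hnx, mul_zero, zero_mul, add_zero]
        exact mul_ne_zero (pow_ne_zero _ (X_ne_zero 2)) (pow_ne_zero _ hQ)

lemma Qq_ev0_ne (hkZ : ∀ p n, 2 ≤ p → p + n ≤ r + 1 → 0 < Zw (fun l => (k l : ℤ)) p n)
    (ha : ∀ i, 1 ≤ i → i ≤ r → 2 ≤ a i)
    (j : ℕ) (hj1 : 1 ≤ j) (hjr : j ≤ r) (i : ℕ) (hi : i ≤ r + 1) :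
    ev0 (Qq k a j i) ≠ 0 := by
  unfold Qq
  rw [map_prod]
  apply Finset.prod_ne_zero_iff.mpr
  intro x hx
  rw [map_pow]
  have hx' := Finset.mem_Ico.mp hx
  exact pow_ne_zero _ (Sq_ev0_ne k a r hkZ ha j hj1 hjr x (by omega) hx'.1)

lemma Qq_ne_zero (hkZ : ∀ p n, 2 ≤ p → p + n ≤ r + 1 → 0 < Zw (fun l => (k l : ℤ)) p n)
    (ha : ∀ i, 1 ≤ i → i ≤ r → 2 ≤ a i)
    (j : ℕ) (hj1 : 1 ≤ j) (hjr : j ≤ r) (i : ℕ) (hi : i ≤ r + 1) :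
    Qq k a j i ≠ 0 := by
  intro h
  exact Qq_ev0_ne k a r hkZ ha j hj1 hjr i hi (by rw [h, map_zero])

lemma Sq_ne_zero (hkZ : ∀ p n, 2 ≤ p → p + n ≤ r + 1 → 0 < Zw (fun l => (k l : ℤ)) p n)
    (ha : ∀ i, 1 ≤ i → i ≤ r → 2 ≤ a i)
    (j : ℕ) (hj1 : 1 ≤ j) (hjr : j ≤ r) (l : ℕ) (hl : l ≤ r) (hl1 : 1 ≤ l) :
    Sq k a j l ≠ 0 := by
  intro h
  exact Sq_ev0_ne k a r hkZ ha j hj1 hjr l hl hl1 (by rw [h, map_zero])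

lemma Qq_not_dvd (hkZ : ∀ p n, 2 ≤ p → p + n ≤ r + 1 → 0 < Zw (fun l => (k l : ℤ)) p n)
    (ha : ∀ i, 1 ≤ i → i ≤ r → 2 ≤ a i)
    (j : ℕ) (hj1 : 1 ≤ j) (hjr : j ≤ r) (i : ℕ) (hi : i ≤ r + 1) :
    ¬ (X 1 : MvPolynomial (Fin 3) ℤ) ∣ Qq k a j i := by
  rintro ⟨c, hc⟩
  apply Qq_ev0_ne k a r hkZ ha j hj1 hjr i hi
  rw [hc, map_mul, ev0_X1, zero_mul]
end NZ

section Main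
open MvPolynomial

theorem zeta_formula (r : ℕ) (a k : ℕ → ℕ)
    (ha : ∀ i, 1 ≤ i → i ≤ r → 2 ≤ a i)
    (hk : ∀ i, 1 ≤ i → i ≤ r → k i ≤ a i)
    (hadm : (triMat fun i : Fin r => ((k (i.1 + 1) : ℕ) : ℝ)).PosSemidef)
    (j : ℕ) (hj1 : 1 ≤ j) (hjr : j ≤ r)
    (ζ : ℕ → FractionRing (MvPolynomial (Fin 3) ℤ))
    (hζ0 : ζ 0 =
      algebraMap (MvPolynomial (Fin 3) ℤ) (FractionRing (MvPolynomial (Fin 3) ℤ))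
          (MvPolynomial.X 1) ^ Zc ((List.range' 1 (j - 1)).map fun l => (k l : ℤ)) *
        algebraMap (MvPolynomial (Fin 3) ℤ) (FractionRing (MvPolynomial (Fin 3) ℤ))
          (MvPolynomial.X 2) ^ Zc ((List.range' 1 j).map fun l => (k l : ℤ)))
    (hζ1 : ζ 1 =
      algebraMap (MvPolynomial (Fin 3) ℤ) (FractionRing (MvPolynomial (Fin 3) ℤ))
          (MvPolynomial.X 1) ^
            (if j = 1 then (0 : ℤ)
              else Zc ((List.range' 2 (j - 2)).map fun l => (k l : ℤ))) *
        algebraMap (MvPolynomial (Fin 3) ℤ) (FractionRing (MvPolynomial (Fin 3) ℤ))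
          (MvPolynomial.X 2) ^ Zc ((List.range' 2 (j - 1)).map fun l => (k l : ℤ)))
    (hζrec : ∀ i, 1 ≤ i → i ≤ r →
      ζ (i + 1) =
        (ζ i ^ a i +
            algebraMap (MvPolynomial (Fin 3) ℤ) (FractionRing (MvPolynomial (Fin 3) ℤ))
              (MvPolynomial.X 0) * ζ i ^ k i) / ζ (i - 1)) :
    ∀ i, i ≤ r + 1 →
      ζ i =
        algebraMap (MvPolynomial (Fin 3) ℤ) (FractionRing (MvPolynomial (Fin 3) ℤ))
            (MvPolynomial.X 1) ^ mI k a j i *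
          algebraMap (MvPolynomial (Fin 3) ℤ) (FractionRing (MvPolynomial (Fin 3) ℤ))
            (MvPolynomial.X 2) ^ mI k a (j+1) i *
          algebraMap (MvPolynomial (Fin 3) ℤ) (FractionRing (MvPolynomial (Fin 3) ℤ))
            (Qq k a j i) := by
  classical
  set A := algebraMap (MvPolynomial (Fin 3) ℤ) (FractionRing (MvPolynomial (Fin 3) ℤ)) with hA
  have hφinj : Function.Injective A := IsFractionRing.injective _ _
  set xK := A (X 1) with hxK
  set yK := A (X 2) with hyK
  set tK := A (X 0) with htK
  have hx : xK ≠ 0 := by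
    rw [hxK]; exact fun h => X_ne_zero 1 (hφinj (by rw [h, map_zero]))
  have hy : yK ≠ 0 := by
    rw [hyK]; exact fun h => X_ne_zero 2 (hφinj (by rw [h, map_zero]))
  have hkZ : ∀ p n, 2 ≤ p → p + n ≤ r + 1 → 0 < Zw (fun l => (k l : ℤ)) p n :=
    fun p n h1 h2 => Zw_pos_int r k hadm p n h1 h2
  have hkey : ∀ (mx my : ℤ) (e : ℕ) (P : MvPolynomial (Fin 3) ℤ),
      (xK ^ mx * yK ^ my * A P) ^ e
        = xK ^ (mx * (e : ℤ)) * yK ^ (my * (e : ℤ)) * A (P ^ e) := by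
    intro mx my e P
    rw [mul_pow, mul_pow, ← zpow_natCast (xK ^ mx) e, ← zpow_mul,
      ← zpow_natCast (yK ^ my) e, ← zpow_mul, map_pow]
  intro i
  induction i using Nat.strong_induction_on with
  | _ i IH =>
    intro hi
    match i with
    | 0 =>
      have hQ : Qq k a j 0 = 1 := by
        unfold Qq; rw [Finset.Ico_eq_empty (by omega), Finset.prod_empty]
      have hmx0 : mI k a j 0 = Zc ((List.range' 1 (j - 1)).map fun l => (k l : ℤ)) := by
        rw [mI_lt k a j 0 hj1]
        unfold Zw
        rw [show (0:ℕ) + 1 = 1 from rfl, show j - 0 - 1 = j - 1 from by omega]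
      have hmy0 : mI k a (j+1) 0 = Zc ((List.range' 1 j).map fun l => (k l : ℤ)) := by
        rw [mI_lt k a (j+1) 0 (by omega)]
        unfold Zw
        rw [show (0:ℕ) + 1 = 1 from rfl, show j + 1 - 0 - 1 = j from by omega]
      rw [hζ0, hQ, map_one, mul_one, hmx0, hmy0]
    | 1 =>
      have hQ : Qq k a j 1 = 1 := by
        unfold Qq; rw [Finset.Ico_eq_empty (by omega), Finset.prod_empty]
      have hmx1 : mI k a j 1
          = (if j = 1 then (0:ℤ) else Zc ((List.range' 2 (j - 2)).map fun l => (k l : ℤ))) := by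
        by_cases hje : j = 1
        · subst hje; rw [if_pos rfl, mI_self]
        · rw [if_neg hje, mI_lt k a j 1 (by omega)]
          unfold Zw
          rw [show (1:ℕ) + 1 = 2 from rfl, show j - 1 - 1 = j - 2 from by omega]
      have hmy1 : mI k a (j+1) 1 = Zc ((List.range' 2 (j - 1)).map fun l => (k l : ℤ)) := by
        rw [mI_lt k a (j+1) 1 (by omega)]
        unfold Zw
        rw [show (1:ℕ) + 1 = 2 from rfl, show j + 1 - 1 - 1 = j - 1 from by omega]
      rw [hζ1, hQ, map_one, mul_one, hmx1, hmy1]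
    | (p + 2) =>
      have hqr : p + 1 ≤ r := by omega
      have IHp := IH p (by omega) (by omega)
      have IHq := IH (p+1) (by omega) (by omega)
      have hrec := hζrec (p+1) (by omega) hqr
      rw [show p + 1 - 1 = p from rfl, show p + 1 + 1 = p + 2 from rfl] at hrec
      set κ := k (p+1) with hκ
      set Mxq := mI k a j (p+1) with hMxq
      set Myq := mI k a (j+1) (p+1) with hMyq
      set nx := nxN k a j (p+1) with hnxd
      set ny := nxN k a (j+1) (p+1) with hnyd
      set el := eL k a (p+1) with held
      have hQp_ne : A (Qq k a j p) ≠ 0 := fun h =>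
        Qq_ne_zero k a r hkZ ha j hj1 hjr p (by omega) (hφinj (by rw [h, map_zero]))
      have hζp_ne : ζ p ≠ 0 := by
        rw [IHp]
        exact mul_ne_zero (mul_ne_zero (zpow_ne_zero _ hx) (zpow_ne_zero _ hy)) hQp_ne
      have hW : xK ^ ((nx : ℤ)) * yK ^ ((ny : ℤ)) ≠ 0 :=
        mul_ne_zero (zpow_ne_zero _ hx) (zpow_ne_zero _ hy)
      have hxid : (pxN k a j (p+1) : ℤ) = (nx : ℤ) + Mxq * (el : ℤ) := by
        have h1 : (pxN k a j (p+1) : ℤ) = (((el : ℤ) * Mxq).toNat : ℤ) := rfl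
        have h2 : (nx : ℤ) = (((el : ℤ) * (-Mxq)).toNat : ℤ) := rfl
        have h2' : (el : ℤ) * (-Mxq) = -((el : ℤ) * Mxq) := by ring
        rw [h2'] at h2
        have h3 : Mxq * (el : ℤ) = (el : ℤ) * Mxq := by ring
        rw [h3]
        set z := (el : ℤ) * Mxq with hz
        omega
      have hyid : (pxN k a (j+1) (p+1) : ℤ) = (ny : ℤ) + Myq * (el : ℤ) := by
        have h1 : (pxN k a (j+1) (p+1) : ℤ) = (((el : ℤ) * Myq).toNat : ℤ) := rfl
        have h2 : (ny : ℤ) = (((el : ℤ) * (-Myq)).toNat : ℤ) := rfl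
        have h2' : (el : ℤ) * (-Myq) = -((el : ℤ) * Myq) := by ring
        rw [h2'] at h2
        have h3 : Myq * (el : ℤ) = (el : ℤ) * Myq := by ring
        rw [h3]
        set z := (el : ℤ) * Myq with hz
        omega
      have hu2 : xK ^ (nx : ℤ) * yK ^ (ny : ℤ) * (ζ (p+1) ^ el + tK)
          = A (Sq k a j (p+1)) := by
        rw [IHq, hkey Mxq Myq el (Qq k a j (p+1)), Sq_eq k a j (p+1)]
        rw [map_add, map_mul, map_mul, map_mul, map_mul, map_pow, map_pow, map_pow,
          map_pow, map_pow]
        rw [← zpow_natCast xK (pxN k a j (p+1)), ← zpow_natCast yK (pxN k a (j+1) (p+1)),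
          ← zpow_natCast xK nx, ← zpow_natCast yK ny, hxid, hyid,
          zpow_add₀ hx, zpow_add₀ hy]
        ring
      have hfact : ζ (p+1) ^ a (p+1) + tK * ζ (p+1) ^ κ
          = ζ (p+1) ^ κ * (ζ (p+1) ^ el + tK) := by
        have hae : a (p+1) = κ + el := by
          rw [hκ, held]; unfold eL; have := hk (p+1) (by omega) hqr; omega
        rw [hae, pow_add]; ring
      have hEx := mI_rec k a r hkZ ha hk j hj1 (by omega) (p+1) (by omega) hqr
      have hEy := mI_rec k a r hkZ ha hk (j+1) (by omega) (by omega) (p+1) (by omega) hqr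
      rw [show p + 1 + 1 = p + 2 from rfl, show p + 1 - 1 = p from rfl] at hEx hEy
      rw [← hκ, ← hnxd, ← hMxq] at hEx
      rw [← hκ, ← hnyd, ← hMyq] at hEy
      have hQr : A (Qq k a j (p+2)) * A (Qq k a j p)
          = A (Qq k a j (p+1) ^ κ) * A (Sq k a j (p+1)) := by
        rw [← map_mul, ← map_mul, Q_rec k a r hkZ j p hqr]
      rw [hrec, div_eq_iff hζp_ne, hfact]
      refine mul_right_cancel₀ hW ?_
      have lhs_eq : (ζ (p+1) ^ κ * (ζ (p+1) ^ el + tK)) * (xK ^ (nx:ℤ) * yK ^ (ny:ℤ))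
          = xK ^ (Mxq * (κ : ℤ)) * yK ^ (Myq * (κ : ℤ))
            * (A (Qq k a j (p+1) ^ κ) * A (Sq k a j (p+1))) := by
        have hre : (ζ (p+1) ^ κ * (ζ (p+1) ^ el + tK)) * (xK ^ (nx:ℤ) * yK ^ (ny:ℤ))
            = (ζ (p+1) ^ κ) * (xK ^ (nx:ℤ) * yK ^ (ny:ℤ) * (ζ (p+1) ^ el + tK)) := by
          ring
        rw [hre, hu2, IHq, hkey Mxq Myq κ (Qq k a j (p+1))]
        ring
      have rhs_eq : (xK ^ mI k a j (p+2) * yK ^ mI k a (j+1) (p+2) * A (Qq k a j (p+2)))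
            * ζ p * (xK ^ (nx:ℤ) * yK ^ (ny:ℤ))
          = xK ^ (mI k a j (p+2) + mI k a j p + (nx:ℤ))
            * yK ^ (mI k a (j+1) (p+2) + mI k a (j+1) p + (ny:ℤ))
            * (A (Qq k a j (p+2)) * A (Qq k a j p)) := by
        rw [IHp, zpow_add₀ hx, zpow_add₀ hx, zpow_add₀ hy, zpow_add₀ hy]
        ring
      rw [lhs_eq, rhs_eq, hQr]
      congr 2
      · congr 1
        linear_combination -hEx
      · congr 1
        linear_combination -hEy


/-- in the fraction field of `ℤ[t,x,y]` (here `t = X 0`, `x = X 1`, `y = X 2`),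
each `ζ_i` is `x^{m_i^{(j)}}·y^{m_i^{(j+1)}}·Q_i` with `Q_i` a polynomial not divisible
by `x`. -/
theorem zeta_eq_monomial_mul_Q (r : ℕ) (a k : ℕ → ℕ)
    (ha : ∀ i, 1 ≤ i → i ≤ r → 2 ≤ a i)
    (hk : ∀ i, 1 ≤ i → i ≤ r → k i ≤ a i)
    (hadm : Admissible fun i : Fin r => k (i.1 + 1))
    (hk0 : Zc ((List.range' 1 r).map fun i => (k i : ℤ)) = 0)
    (j : ℕ) (hj1 : 1 ≤ j) (hjr : j ≤ r)
    (m : ℕ → ℕ → ℤ)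
    (hm : ∀ i jj, m i jj =
      if i ≤ jj then
        (if i = jj then 0
          else Zc ((List.range' (i + 1) (jj - i - 1)).map fun l => (k l : ℤ)))
      else -Zc ((List.range' (jj + 1) (i - jj - 1)).map fun l => (a l : ℤ)))
    (ζ : ℕ → FractionRing (MvPolynomial (Fin 3) ℤ))
    (hζ0 : ζ 0 =
      algebraMap (MvPolynomial (Fin 3) ℤ) (FractionRing (MvPolynomial (Fin 3) ℤ))
          (MvPolynomial.X 1) ^ Zc ((List.range' 1 (j - 1)).map fun l => (k l : ℤ)) *
        algebraMap (MvPolynomial (Fin 3) ℤ) (FractionRing (MvPolynomial (Fin 3) ℤ))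
          (MvPolynomial.X 2) ^ Zc ((List.range' 1 j).map fun l => (k l : ℤ)))
    (hζ1 : ζ 1 =
      algebraMap (MvPolynomial (Fin 3) ℤ) (FractionRing (MvPolynomial (Fin 3) ℤ))
          (MvPolynomial.X 1) ^
            (if j = 1 then (0 : ℤ)
              else Zc ((List.range' 2 (j - 2)).map fun l => (k l : ℤ))) *
        algebraMap (MvPolynomial (Fin 3) ℤ) (FractionRing (MvPolynomial (Fin 3) ℤ))
          (MvPolynomial.X 2) ^ Zc ((List.range' 2 (j - 1)).map fun l => (k l : ℤ)))
    (hζrec : ∀ i, 1 ≤ i → i ≤ r →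
      ζ (i + 1) =
        (ζ i ^ a i +
            algebraMap (MvPolynomial (Fin 3) ℤ) (FractionRing (MvPolynomial (Fin 3) ℤ))
              (MvPolynomial.X 0) * ζ i ^ k i) / ζ (i - 1)) :
    ∀ i, 1 ≤ i → i ≤ r + 1 →
      ∃ Q : MvPolynomial (Fin 3) ℤ, ¬ MvPolynomial.X 1 ∣ Q ∧
        ζ i =
          algebraMap (MvPolynomial (Fin 3) ℤ) (FractionRing (MvPolynomial (Fin 3) ℤ))
              (MvPolynomial.X 1) ^ m i j *
            algebraMap (MvPolynomial (Fin 3) ℤ) (FractionRing (MvPolynomial (Fin 3) ℤ))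
              (MvPolynomial.X 2) ^ m i (j + 1) *
            algebraMap (MvPolynomial (Fin 3) ℤ) (FractionRing (MvPolynomial (Fin 3) ℤ)) Q := by
  
  intro i hi1 hir
  have hkZ : ∀ p n, 2 ≤ p → p + n ≤ r + 1 → 0 < Zw (fun l => (k l : ℤ)) p n :=
    fun p n h1 h2 => Zw_pos_int r k hadm.1 p n h1 h2
  refine ⟨Qq k a j i, Qq_not_dvd k a r hkZ ha j hj1 hjr i hir, ?_⟩
  have hmx : m i j = mI k a j i := by rw [hm i j]; rfl
  have hmy : m i (j+1) = mI k a (j+1) i := by rw [hm i (j+1)]; rfl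
  rw [hmx, hmy]
  exact zeta_formula r a k ha hk hadm.1 j hj1 hjr ζ hζ0 hζ1 hζrec i hir

end Main
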